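/- Let V₁, V₂ be finite-dimensional real vector spaces and g ⊆ gl(V₁ ⊕ V₂) a Lie subalgebra preserving both summands and faithful on each. Suppose R : V₁ × V₂ → g is a bilinear map satisfying R(x,y')z' = R(x,z')y' and R(x,y')t = R(t,y')x for all x,t ∈ V₁ and y',z' ∈ V₂ (elements of g acting on V₁ ⊕ V₂). Then the extension of R to an alternating bilinear map on (V₁ ⊕ V₂)² defined by R̃((x₁,y₁),(x₂,y₂)) := R(x₁,y₂) - R(x₂,y₁) satisfies the first Bianchi identity. -/

import Mathlib

attribute [local instance 100] LieRing.ofAssociativeRing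

theorem stmt_14 (V₁ V₂ : Type*) [AddCommGroup V₁] [Module ℝ V₁]
    [AddCommGroup V₂] [Module ℝ V₂]
    [FiniteDimensional ℝ V₁] [FiniteDimensional ℝ V₂]
    (g : LieSubalgebra ℝ (Module.End ℝ (V₁ × V₂)))
    (hpres₁ : ∀ A ∈ g, ∀ x : V₁, (A (x, 0)).2 = 0)
    (hpres₂ : ∀ A ∈ g, ∀ y : V₂, (A (0, y)).1 = 0)
    (hfaith₁ : ∀ A ∈ g, (∀ x : V₁, A (x, 0) = 0) → A = 0)
    (hfaith₂ : ∀ A ∈ g, (∀ y : V₂, A (0, y) = 0) → A = 0)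
    (R : V₁ →ₗ[ℝ] V₂ →ₗ[ℝ] Module.End ℝ (V₁ × V₂))
    (hval : ∀ x y', R x y' ∈ g)
    (hsym₂ : ∀ (x : V₁) (y' z' : V₂), R x y' (0, z') = R x z' (0, y'))
    (hsym₁ : ∀ (x t : V₁) (y' : V₂), R x y' (t, 0) = R t y' (x, 0)) :
    ∀ a b c : V₁ × V₂,
      (R a.1 b.2 - R b.1 a.2) c + (R b.1 c.2 - R c.1 b.2) a
        + (R c.1 a.2 - R a.1 c.2) b = 0 := by
  rintro ⟨a1, a2⟩ ⟨b1, b2⟩ ⟨c1, c2⟩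
  have h : ∀ (f : Module.End ℝ (V₁ × V₂)) (u : V₁) (v : V₂),
      f (u, v) = f (u, 0) + f (0, v) := by
    intro f u v
    rw [← map_add]
    simp
  simp only [LinearMap.sub_apply]
  rw [h (R a1 b2) c1 c2, h (R b1 a2) c1 c2, h (R b1 c2) a1 a2,
      h (R c1 b2) a1 a2, h (R c1 a2) b1 b2, h (R a1 c2) b1 b2]
  rw [hsym₁ a1 c1 b2, hsym₁ b1 a1 c2, hsym₁ c1 b1 a2,
      hsym₂ a1 b2 c2, hsym₂ b1 c2 a2, hsym₂ c1 a2 b2]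
  abel
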